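/- Hashing formula for the sub-sampled function: let g : {0,1}^n → ℝ with Fourier transform ĝ, let σ ∈ {0,1}^{n×b} (viewed as a matrix over GF(2)), and define u_σ : {0,1}^b → ℝ by u_σ(x̃) = √(2^n/2^b) · g(σx̃), where σx̃ is matrix-vector multiplication mod 2. Then the Fourier transform of u_σ satisfies û_σ(f̃) = Σ_{f∈{0,1}^n : σᵀf = f̃} ĝ(f) for every f̃ ∈ {0,1}^b, where σᵀf is also taken mod 2. -/

import Mathlib

open Finset Matrix

/-- Integer inner product of Boolean vectors. -/
def bip {n : ℕ} (f x : Fin n → ZMod 2) : ℕ := ∑ i, (f i).val * (x i).val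

/-- Walsh–Hadamard Fourier coefficient of `g : {0,1}^m → ℝ` at frequency `f`. -/
noncomputable def wcoef {m : ℕ} (g : (Fin m → ZMod 2) → ℝ) (f : Fin m → ZMod 2) : ℝ :=
  (1 / Real.sqrt (2 ^ m)) * ∑ x : Fin m → ZMod 2, g x * (-1 : ℝ) ^ (bip f x)

/-- The character `χ(c) = (-1)^c` on `ZMod 2`. -/
noncomputable def chi (c : ZMod 2) : ℝ := (-1 : ℝ) ^ c.val

lemma chi_add (a c : ZMod 2) : chi (a + c) = chi a * chi c := by
  have h : ∀ x : ZMod 2, x = 0 ∨ x = 1 := by decide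
  have e2 : ((2 : ZMod 2)).val = 0 := rfl
  have e1 : ((1 : ZMod 2)).val = 1 := rfl
  rcases h a with h1 | h1 <;> rcases h c with h2 | h2 <;>
    simp [h1, h2, chi, e1, e2] <;> norm_num [one_add_one_eq_two, e2]

lemma chi_sum {ι : Type*} (s : Finset ι) (v : ι → ZMod 2) :
    chi (∑ i ∈ s, v i) = ∏ i ∈ s, chi (v i) := by
  classical
  induction s using Finset.cons_induction with
  | empty => simp [chi]
  | cons i s hi ih => rw [Finset.sum_cons, Finset.prod_cons, chi_add, ih]

lemma pow_bip_eq {m : ℕ} (f x : Fin m → ZMod 2) :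
    (-1 : ℝ) ^ (bip f x) = chi (f ⬝ᵥ x) := by
  rw [bip, ← Finset.prod_pow_eq_pow_sum, dotProduct, chi_sum]
  refine Finset.prod_congr rfl fun i _ => ?_
  have : (f i * x i).val = (f i).val * (x i).val := by
    have h : ∀ a c : ZMod 2, (a * c).val = a.val * c.val := by decide
    exact h _ _
  rw [chi, this]

lemma wcoef_eq {m : ℕ} (g : (Fin m → ZMod 2) → ℝ) (f : Fin m → ZMod 2) :
    wcoef g f = (1 / Real.sqrt (2 ^ m)) * ∑ x : Fin m → ZMod 2, g x * chi (f ⬝ᵥ x) := by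
  simp [wcoef, pow_bip_eq]

lemma sum_chi {m : ℕ} (v : Fin m → ZMod 2) :
    ∑ x : Fin m → ZMod 2, chi (v ⬝ᵥ x) = if v = 0 then (2 : ℝ) ^ m else 0 := by
  classical
  by_cases hv : v = 0
  · simp [hv, chi, dotProduct, Fintype.card_fun]
  · simp only [hv, if_false]
    obtain ⟨i, hi⟩ : ∃ i, v i ≠ 0 := by
      by_contra h
      push_neg at h
      exact hv (funext fun i => h i)
    have hvi : v i = 1 := by
      have : ∀ a : ZMod 2, a ≠ 0 → a = 1 := by decide
      exact this _ hi
    set S := ∑ x : Fin m → ZMod 2, chi (v ⬝ᵥ x) with hS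
    have key : S = -S := by
      have hb : Function.Bijective (fun x : Fin m → ZMod 2 => x + Pi.single i 1) := by
        exact (Equiv.addRight (Pi.single i 1)).bijective
      calc S = ∑ x : Fin m → ZMod 2, chi (v ⬝ᵥ (x + Pi.single i 1)) := by
              exact (Fintype.sum_bijective _ hb _ _ (fun x => rfl)).symm
        _ = ∑ x : Fin m → ZMod 2, -chi (v ⬝ᵥ x) := by
              refine Finset.sum_congr rfl fun x _ => ?_
              rw [dotProduct_add, dotProduct_single, hvi, one_mul, chi_add]
              have e1 : ((1 : ZMod 2)).val = 1 := rfl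
              simp [chi, e1]
        _ = -S := by rw [Finset.sum_neg_distrib]
    linarith

lemma inv_transform {m : ℕ} (g : (Fin m → ZMod 2) → ℝ) (y : Fin m → ZMod 2) :
    ∑ f : Fin m → ZMod 2, wcoef g f * chi (f ⬝ᵥ y) = Real.sqrt (2 ^ m) * g y := by
  classical
  have key : ∀ x : Fin m → ZMod 2, ∑ f : Fin m → ZMod 2, chi (f ⬝ᵥ x) * chi (f ⬝ᵥ y)
      = if x = y then (2 : ℝ) ^ m else 0 := by
    intro x
    have h1 : ∀ f : Fin m → ZMod 2,
        chi (f ⬝ᵥ x) * chi (f ⬝ᵥ y) = chi ((x + y) ⬝ᵥ f) := by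
      intro f
      rw [← chi_add, ← dotProduct_add, dotProduct_comm]
    simp_rw [h1]
    rw [sum_chi]
    have hiff : x + y = 0 ↔ x = y := by
      constructor
      · intro h; funext i
        have h2 : ∀ a c : ZMod 2, a + c = 0 → a = c := by decide
        exact h2 _ _ (congrFun h i)
      · intro h; subst h; funext i
        have h2 : ∀ a : ZMod 2, a + a = 0 := by decide
        exact h2 _
    rw [if_congr hiff rfl rfl]
  have expand : ∀ f : Fin m → ZMod 2, wcoef g f * chi (f ⬝ᵥ y)
      = (1 / Real.sqrt (2 ^ m)) * ∑ x : Fin m → ZMod 2, g x * (chi (f ⬝ᵥ x) * chi (f ⬝ᵥ y)) := by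
    intro f
    rw [wcoef_eq, mul_assoc, Finset.sum_mul]
    congr 1
    exact Finset.sum_congr rfl fun x _ => by ring
  simp_rw [expand]
  rw [← Finset.mul_sum, Finset.sum_comm]
  have hrow : ∀ x : Fin m → ZMod 2,
      ∑ f : Fin m → ZMod 2, g x * (chi (f ⬝ᵥ x) * chi (f ⬝ᵥ y))
      = g x * (if x = y then (2 : ℝ) ^ m else 0) := by
    intro x
    rw [← Finset.mul_sum, key x]
  simp_rw [hrow]
  have hcollapse : ∑ x : Fin m → ZMod 2, g x * (if x = y then (2 : ℝ) ^ m else 0)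
      = g y * (2 : ℝ) ^ m := by
    rw [Finset.sum_eq_single y]
    · simp
    · intro x _ hx; simp [hx]
    · intro h; exact absurd (Finset.mem_univ y) h
  rw [hcollapse]
  have hss : Real.sqrt ((2 : ℝ) ^ m) * Real.sqrt ((2 : ℝ) ^ m) = (2 : ℝ) ^ m :=
    Real.mul_self_sqrt (by positivity)
  have hne : Real.sqrt ((2 : ℝ) ^ m) ≠ 0 := by positivity
  field_simp
  linear_combination (-g y) * hss

/-- Hashing formula: the Fourier coefficient of the sub-sampled function
`u_σ(x̃) = √(2^n/2^b) · g(σ x̃)` at `f̃` is the sum of the Fourier coefficients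
of `g` over all frequencies `f` hashed to the bucket `f̃`, i.e. with `σᵀ f = f̃`. -/
theorem hashing_formula (n b : ℕ) (g : (Fin n → ZMod 2) → ℝ)
    (σ : Matrix (Fin n) (Fin b) (ZMod 2))
    (u : (Fin b → ZMod 2) → ℝ)
    (hu : ∀ xt : Fin b → ZMod 2,
      u xt = Real.sqrt ((2 : ℝ) ^ n / (2 : ℝ) ^ b) * g (σ.mulVec xt)) :
    ∀ ft : Fin b → ZMod 2,
      wcoef u ft =
        ∑ f ∈ Finset.univ.filter (fun f : Fin n → ZMod 2 => σᵀ.mulVec f = ft),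
          wcoef g f := by
  intro ft
  classical
  have hswap : ∀ (f : Fin n → ZMod 2) (xt : Fin b → ZMod 2),
      σᵀ *ᵥ f ⬝ᵥ xt = f ⬝ᵥ σ *ᵥ xt := by
    intro f xt
    rw [dotProduct_mulVec, mulVec_transpose]
  have heq : ∀ f : Fin n → ZMod 2, (σᵀ *ᵥ f + ft = 0) ↔ σᵀ *ᵥ f = ft := by
    intro f
    constructor
    · intro h; funext i
      have h2 : ∀ a c : ZMod 2, a + c = 0 → a = c := by decide
      exact h2 _ _ (congrFun h i)
    · intro h; rw [h]; funext i
      have h2 : ∀ a : ZMod 2, a + a = 0 := by decide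
      exact h2 _
  have key : ∀ f : Fin n → ZMod 2,
      (if σᵀ.mulVec f = ft then wcoef g f else 0)
      = (1 / (2 : ℝ) ^ b) *
          ∑ xt : Fin b → ZMod 2, (wcoef g f * chi (f ⬝ᵥ σ *ᵥ xt)) * chi (ft ⬝ᵥ xt) := by
    intro f
    have h1 : ∀ xt : Fin b → ZMod 2,
        (wcoef g f * chi (f ⬝ᵥ σ *ᵥ xt)) * chi (ft ⬝ᵥ xt)
          = wcoef g f * chi ((σᵀ *ᵥ f + ft) ⬝ᵥ xt) := by
      intro xt
      rw [mul_assoc, ← chi_add, ← hswap f xt, ← add_dotProduct]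
    simp_rw [h1]
    rw [← Finset.mul_sum, sum_chi]
    by_cases hc : σᵀ *ᵥ f = ft
    · rw [if_pos hc, if_pos ((heq f).mpr hc)]
      field_simp
    · rw [if_neg hc, if_neg (fun h => hc ((heq f).mp h)), mul_zero, mul_zero]
  rw [Finset.sum_filter]
  simp_rw [key]
  rw [← Finset.mul_sum, Finset.sum_comm]
  have hrow : ∀ xt : Fin b → ZMod 2,
      ∑ f : Fin n → ZMod 2, (wcoef g f * chi (f ⬝ᵥ σ *ᵥ xt)) * chi (ft ⬝ᵥ xt)
        = (Real.sqrt (2 ^ n) * g (σ *ᵥ xt)) * chi (ft ⬝ᵥ xt) := by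
    intro xt
    rw [← Finset.sum_mul, inv_transform]
  simp_rw [hrow]
  rw [wcoef_eq]
  have hsqrt : Real.sqrt ((2 : ℝ) ^ n / (2 : ℝ) ^ b)
      = Real.sqrt ((2 : ℝ) ^ n) / Real.sqrt ((2 : ℝ) ^ b) :=
    Real.sqrt_div (by positivity) _
  simp_rw [hu, hsqrt]
  have l1 : ∑ xt : Fin b → ZMod 2,
      (Real.sqrt ((2 : ℝ) ^ n) / Real.sqrt ((2 : ℝ) ^ b) * g (σ *ᵥ xt)) * chi (ft ⬝ᵥ xt)
      = (Real.sqrt ((2 : ℝ) ^ n) / Real.sqrt ((2 : ℝ) ^ b)) *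
          ∑ xt : Fin b → ZMod 2, g (σ *ᵥ xt) * chi (ft ⬝ᵥ xt) := by
    rw [Finset.mul_sum]
    exact Finset.sum_congr rfl fun _ _ => by ring
  have l2 : ∑ xt : Fin b → ZMod 2,
      (Real.sqrt ((2 : ℝ) ^ n) * g (σ *ᵥ xt)) * chi (ft ⬝ᵥ xt)
      = Real.sqrt ((2 : ℝ) ^ n) *
          ∑ xt : Fin b → ZMod 2, g (σ *ᵥ xt) * chi (ft ⬝ᵥ xt) := by
    rw [Finset.mul_sum]
    exact Finset.sum_congr rfl fun _ _ => by ring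
  rw [l1, l2]
  have hss : Real.sqrt ((2 : ℝ) ^ b) * Real.sqrt ((2 : ℝ) ^ b) = (2 : ℝ) ^ b :=
    Real.mul_self_sqrt (by positivity)
  have hne : Real.sqrt ((2 : ℝ) ^ b) ≠ 0 := by positivity
  have hbne : ((2 : ℝ) ^ b) ≠ 0 := by positivity
  field_simp
  rw [Real.sq_sqrt (by positivity)]
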